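/- (Gauge invariance of the QAOA cost expectation.) For every Hermitian operator H on the n-qubit state space, every depth p ≥ 1, all parameter vectors γ, β ∈ ℝ^p, and every bitstring y ∈ {0,1}^n, the expectation value of the gauge-transformed Hamiltonian in the gauge-transformed QAOA output state equals the expectation value of the original Hamiltonian in the original QAOA output state: ⟨s| U(H^y; γ, β)† H^y U(H^y; γ, β) |s⟩ = ⟨s| U(H; γ, β)† H U(H; γ, β) |s⟩, where H^y = P_y H P_y and |s⟩ = |+⟩^{⊗n}. -/

import Mathlib

open Matrix

/-- The computational basis state `|x⟩` on `n` qubits. -/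
def ket {n : ℕ} (x : Fin n → Bool) : (Fin n → Bool) → ℂ :=
  fun z => if z = x then 1 else 0

/-- The Pauli `X` operator on qubit `j`, sending `|x⟩` to `|x ⊕ e_j⟩`. -/
def PauliX {n : ℕ} (j : Fin n) : Matrix (Fin n → Bool) (Fin n → Bool) ℂ :=
  fun a b => if a = (fun i => xor (b i) (if i = j then true else false)) then 1 else 0

/-- The bitflip operator `P_y`, the linear map sending `|x⟩` to `|x ⊕ y⟩`. -/
def bitflip {n : ℕ} (y : Fin n → Bool) : Matrix (Fin n → Bool) (Fin n → Bool) ℂ :=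
  fun a b => if a = (fun i => xor (b i) (y i)) then 1 else 0

/-- The uniform superposition state `|s⟩ = |+⟩^{⊗n} = 2^{-n/2} Σ_{x ∈ {0,1}^n} |x⟩`. -/
noncomputable def uniformState (n : ℕ) : (Fin n → Bool) → ℂ :=
  ((Real.sqrt 2 : ℂ) ^ n)⁻¹ • ∑ x : Fin n → Bool, ket x

/-- The QAOA phase separator `U_P(H; γ) = exp(-iγH)`. -/
noncomputable def phaseSep {n : ℕ} (H : Matrix (Fin n → Bool) (Fin n → Bool) ℂ) (γ : ℝ) :
    Matrix (Fin n → Bool) (Fin n → Bool) ℂ :=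
  NormedSpace.exp ((-(Complex.I * (γ : ℂ))) • H)

/-- The QAOA mixer `U_M(β) = exp(-iβ Σ_j X_j)`. -/
noncomputable def mixer (n : ℕ) (β : ℝ) : Matrix (Fin n → Bool) (Fin n → Bool) ℂ :=
  NormedSpace.exp ((-(Complex.I * (β : ℂ))) • ∑ j : Fin n, PauliX j)

/-- The depth-`p` QAOA circuit `U(H; γ, β) = ∏_{l=p}^{1} U_M(β_l) U_P(H; γ_l)`,
with the `l = 1` layer acting first (i.e. appearing rightmost in the product). -/
noncomputable def qaoaCircuit {n : ℕ} (H : Matrix (Fin n → Bool) (Fin n → Bool) ℂ)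
    (p : ℕ) (γ β : Fin p → ℝ) : Matrix (Fin n → Bool) (Fin n → Bool) ℂ :=
  ((List.ofFn (fun l : Fin p => mixer n (β l) * phaseSep H (γ l))).reverse).prod

lemma bitflip_sq {n : ℕ} (y : Fin n → Bool) : bitflip y * bitflip y = 1 := by
  ext a b
  rw [Matrix.mul_apply, Finset.sum_eq_single (fun i => xor (b i) (y i))]
  · have h2 : (fun i => xor (xor (b i) (y i)) (y i)) = b := by
      funext i; simp [Bool.xor_assoc]
    simp only [bitflip, Matrix.one_apply]
    simp [h2]
  · intro c _ hc
    simp only [bitflip]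
    rw [if_neg hc, mul_zero]
  · simp

lemma bitflip_conjTranspose {n : ℕ} (y : Fin n → Bool) : (bitflip y)ᴴ = bitflip y := by
  ext a b
  simp only [bitflip, Matrix.conjTranspose_apply]
  by_cases h : a = fun i => xor (b i) (y i)
  · have h' : b = fun i => xor (a i) (y i) := by subst h; funext i; simp [Bool.xor_assoc]
    rw [if_pos h', if_pos h]; simp
  · have h' : ¬ (b = fun i => xor (a i) (y i)) := fun hb => h (by subst hb; funext i; simp [Bool.xor_assoc])
    rw [if_neg h', if_neg h]; simp

lemma bitflip_comm_pauli {n : ℕ} (y : Fin n → Bool) (j : Fin n) :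
    Commute (bitflip y) (PauliX j) := by
  show _ = _
  ext a b
  rw [Matrix.mul_apply, Matrix.mul_apply,
    Finset.sum_eq_single (fun i => xor (b i) (if i = j then true else false)),
    Finset.sum_eq_single (fun i => xor (b i) (y i))]
  · simp only [bitflip, PauliX, if_pos rfl, if_true, mul_one, one_mul]
    have hf : ∀ f g : Fin n → Bool, f = g →
        ((if a = f then (1:ℂ) else 0) = if a = g then 1 else 0) := by
      intro f g h; rw [h]
    apply hf
    funext i
    cases b i <;> cases y i <;> simp [Bool.xor_comm]
  all_goals first
    | (intro h; exact absurd (Finset.mem_univ _) h)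
    | (intro c _ hc; simp only [bitflip, PauliX]; rw [if_neg hc]; ring)
noncomputable def flipUnit {n : ℕ} (y : Fin n → Bool) :
    (Matrix (Fin n → Bool) (Fin n → Bool) ℂ)ˣ :=
  ⟨bitflip y, bitflip y, bitflip_sq y, bitflip_sq y⟩

lemma bitflip_conj_exp {n : ℕ} (y : Fin n → Bool)
    (A : Matrix (Fin n → Bool) (Fin n → Bool) ℂ) :
    bitflip y * NormedSpace.exp A * bitflip y =
      NormedSpace.exp (bitflip y * A * bitflip y) := by
  have := (Matrix.exp_units_conj (flipUnit y) A).symm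
  simpa [flipUnit] using this

lemma bitflip_smul_conj {n : ℕ} (y : Fin n → Bool) (c : ℂ)
    (A : Matrix (Fin n → Bool) (Fin n → Bool) ℂ) :
    bitflip y * (c • A) * bitflip y = c • (bitflip y * A * bitflip y) := by
  rw [mul_smul_comm, smul_mul_assoc]

lemma phaseSep_conj {n : ℕ} (y : Fin n → Bool)
    (H : Matrix (Fin n → Bool) (Fin n → Bool) ℂ) (γ : ℝ) :
    phaseSep (bitflip y * H * bitflip y) γ = bitflip y * phaseSep H γ * bitflip y := by
  unfold phaseSep
  rw [bitflip_conj_exp, bitflip_smul_conj]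

lemma bitflip_comm_sum {n : ℕ} (y : Fin n → Bool) :
    bitflip y * (∑ j : Fin n, PauliX j) = (∑ j : Fin n, PauliX j) * bitflip y := by
  rw [Finset.mul_sum, Finset.sum_mul]
  exact Finset.sum_congr rfl fun j _ => (bitflip_comm_pauli y j).eq

lemma mixer_conj {n : ℕ} (y : Fin n → Bool) (β : ℝ) :
    bitflip y * mixer n β * bitflip y = mixer n β := by
  unfold mixer
  rw [bitflip_conj_exp, bitflip_smul_conj]
  congr 2
  rw [bitflip_comm_sum, mul_assoc, bitflip_sq, mul_one]

lemma mixer_comm {n : ℕ} (y : Fin n → Bool) (β : ℝ) :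
    bitflip y * mixer n β = mixer n β * bitflip y := by
  conv_rhs => rw [← mixer_conj y β]
  rw [mul_assoc, mul_assoc, bitflip_sq, mul_one]

lemma conj_list_prod {n : ℕ} (y : Fin n → Bool)
    (L : List (Matrix (Fin n → Bool) (Fin n → Bool) ℂ)) :
    (L.map (fun A => bitflip y * A * bitflip y)).prod = bitflip y * L.prod * bitflip y := by
  induction L with
  | nil => simp [bitflip_sq]
  | cons A L ih =>
    simp only [List.map_cons, List.prod_cons, ih]
    rw [mul_assoc (bitflip y * A)]
    rw [show bitflip y * (bitflip y * L.prod * bitflip y) = L.prod * bitflip y by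
      rw [← mul_assoc, ← mul_assoc, bitflip_sq, one_mul]]
    rw [mul_assoc, mul_assoc, mul_assoc]

lemma qaoaCircuit_conj {n : ℕ} (y : Fin n → Bool)
    (H : Matrix (Fin n → Bool) (Fin n → Bool) ℂ) (p : ℕ) (γ β : Fin p → ℝ) :
    qaoaCircuit (bitflip y * H * bitflip y) p γ β =
      bitflip y * qaoaCircuit H p γ β * bitflip y := by
  unfold qaoaCircuit
  have hl : (List.ofFn fun l => mixer n (β l) * phaseSep (bitflip y * H * bitflip y) (γ l)) =
      (List.ofFn fun l => mixer n (β l) * phaseSep H (γ l)).map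
        (fun A => bitflip y * A * bitflip y) := by
    rw [List.map_ofFn]
    congr 1
    funext l
    simp only [Function.comp]
    rw [phaseSep_conj, ← mul_assoc, ← mul_assoc, ← mixer_comm, mul_assoc (bitflip y), mul_assoc]
  rw [hl, ← List.map_reverse, conj_list_prod]

lemma uniformState_const {n : ℕ} :
    uniformState n = fun _ => ((Real.sqrt 2 : ℂ) ^ n)⁻¹ := by
  funext z
  simp only [uniformState, Pi.smul_apply, Finset.sum_apply, ket, smul_eq_mul]
  rw [Finset.sum_ite_eq Finset.univ z (fun _ => (1:ℂ))]
  simp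

lemma bitflip_mulVec_uniform {n : ℕ} (y : Fin n → Bool) :
    bitflip y *ᵥ uniformState n = uniformState n := by
  funext a
  rw [uniformState_const]
  simp only [Matrix.mulVec, dotProduct, bitflip]
  rw [Finset.sum_eq_single (fun i => xor (a i) (y i))]
  · rw [if_pos, one_mul]
    funext i; simp [Bool.xor_assoc]
  · intro c _ hc
    rw [if_neg fun h => hc ?_, zero_mul]
    subst h; funext i; simp [Bool.xor_assoc]
  · simp

lemma bitflip_dot {n : ℕ} (y : Fin n → Bool) (v u : (Fin n → Bool) → ℂ) :
    star (bitflip y *ᵥ v) ⬝ᵥ (bitflip y *ᵥ u) = star v ⬝ᵥ u := by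
  rw [Matrix.star_mulVec, bitflip_conjTranspose, ← Matrix.dotProduct_mulVec,
    Matrix.mulVec_mulVec, bitflip_sq, Matrix.one_mulVec]


/-- Gauge invariance of the QAOA cost expectation: for Hermitian `H` and `H^y = P_y H P_y`,
`⟨s| U(H^y)† H^y U(H^y) |s⟩ = ⟨s| U(H)† H U(H) |s⟩`. -/
theorem qaoa_expectation_gauge {n : ℕ} (H : Matrix (Fin n → Bool) (Fin n → Bool) ℂ)
    (hH : Hᴴ = H) (p : ℕ) (hp : 1 ≤ p) (γ β : Fin p → ℝ) (y : Fin n → Bool) :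
    star (qaoaCircuit (bitflip y * H * bitflip y) p γ β *ᵥ uniformState n) ⬝ᵥ
        ((bitflip y * H * bitflip y) *ᵥ
          (qaoaCircuit (bitflip y * H * bitflip y) p γ β *ᵥ uniformState n)) =
      star (qaoaCircuit H p γ β *ᵥ uniformState n) ⬝ᵥ
        (H *ᵥ (qaoaCircuit H p γ β *ᵥ uniformState n)) := by
  rw [qaoaCircuit_conj]
  have h1 : (bitflip y * qaoaCircuit H p γ β * bitflip y) *ᵥ uniformState n =
      bitflip y *ᵥ (qaoaCircuit H p γ β *ᵥ uniformState n) := by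
    rw [← Matrix.mulVec_mulVec, bitflip_mulVec_uniform, Matrix.mulVec_mulVec]
  rw [h1]
  set w := qaoaCircuit H p γ β *ᵥ uniformState n with hw
  have h2 : (bitflip y * H * bitflip y) *ᵥ (bitflip y *ᵥ w) = bitflip y *ᵥ (H *ᵥ w) := by
    rw [Matrix.mulVec_mulVec, mul_assoc, mul_assoc, bitflip_sq, mul_one, ← Matrix.mulVec_mulVec]
  rw [h2, bitflip_dot]
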